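/- arXiv:1008.4203 — 3 statements merged into one kernel-verified Lean document; each statement's English description precedes it below -/
import Mathlib

section
/- (Theorem 2, result R1.) Let α ∈ (0,1), let z satisfy P(−z ≤ Z ≤ z) = 1−α for Z ~ N(0,1), let q > 0 and 0 < L < ∞. Suppose b : ℝ → ℝ is continuous and strictly increasing with uniformly continuous inverse, and that e(x) := b(x) − x − z satisfies e(x) = 0 for all |x| ≥ q and |e(x) − e(y)| ≤ L|x − y| for all x, y. For each n ≥ 2 and ψ ∈ ℝ, let X ~ N(ψ,1) and let R_n be a positive random variable independent of X with (n−1)R_n² having a chi-squared distribution with n−1 degrees of freedom (the joint distribution of (X, R_n) being that of (√n Ȳ_n/σ, Σ̂_n/σ) from n i.i.d. N(θ,σ²) observations with ψ = √n θ/σ). Define C* = [−b(−X), b(X)] and D*_n = [−R_n b(−X/R_n), R_n b(X/R_n)]. Then sup_{ψ∈ℝ} |P_ψ(ψ ∈ C*) − P_ψ(ψ ∈ D*_n)| → 0 as n → ∞. -/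
open MeasureTheory ProbabilityTheory Real Filter

/-- The chi-squared distribution with `k` degrees of freedom. -/
noncomputable def chiSq (k : ℕ) : Measure ℝ := gammaMeasure ((k : ℝ) / 2) (1 / 2)

/-- The law of `R n = Σ̂ n / σ`, i.e. of `√(W/(n-1))` with `W ~ χ²_{n-1}`. -/
noncomputable def chiR (n : ℕ) : Measure ℝ :=
  (chiSq (n - 1)).map fun w => Real.sqrt (w / (n - 1))


set_option maxHeartbeats 1000000

section Stmt5Aux
open Set

lemma s5_gaussPDF_le (ψ x : ℝ) : gaussianPDF ψ 1 x ≤ ENNReal.ofReal (1/2) := by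
  rw [gaussianPDF]
  apply ENNReal.ofReal_le_ofReal
  rw [gaussianPDFReal]
  have hc : ((1:NNReal):ℝ) = 1 := by norm_num
  rw [hc]
  have h1 : Real.sqrt (2 * π * 1) ≥ 2 := by
    rw [mul_one]
    calc (2:ℝ) = Real.sqrt 4 := by
          rw [show (4:ℝ) = 2^2 by norm_num, Real.sqrt_sq]; norm_num
      _ ≤ Real.sqrt (2*π) := Real.sqrt_le_sqrt (by nlinarith [Real.pi_gt_three])
  have h2 : rexp (-(x - ψ)^2 / (2 * 1)) ≤ 1 := by
    rw [Real.exp_le_one_iff]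
    nlinarith [sq_nonneg (x - ψ)]
  have h3 : (Real.sqrt (2 * π * 1))⁻¹ ≤ 1/2 := by
    rw [inv_le_comm₀ (by linarith) (by norm_num)]
    linarith [h1]
  calc (Real.sqrt (2 * π * 1))⁻¹ * rexp (-(x - ψ)^2 / (2 * 1))
      ≤ (1/2) * 1 := mul_le_mul h3 h2 (le_of_lt (Real.exp_pos _)) (by norm_num)
    _ = 1/2 := by norm_num

lemma s5_gauss_Icc_le (ψ s t : ℝ) : gaussianReal ψ 1 (Icc s t) ≤ ENNReal.ofReal ((t - s)/2) := by
  rw [gaussianReal_apply ψ one_ne_zero]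
  calc ∫⁻ x in Icc s t, gaussianPDF ψ 1 x
      ≤ ∫⁻ _ in Icc s t, ENNReal.ofReal (1/2) := lintegral_mono (fun x => s5_gaussPDF_le ψ x)
    _ = ENNReal.ofReal (1/2) * volume (Icc s t) := setLIntegral_const _ _
    _ = ENNReal.ofReal (1/2) * ENNReal.ofReal (t - s) := by rw [Real.volume_Icc]
    _ = ENNReal.ofReal ((t-s)/2) := by
        rw [← ENNReal.ofReal_mul (by norm_num)]; ring_nf

lemma s5_gauss_Icc_le_add (ψ a b c d : ℝ) :
    gaussianReal ψ 1 (Icc a b) ≤ gaussianReal ψ 1 (Icc c d)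
      + ENNReal.ofReal ((|a - c| + |b - d|)/2) := by
  have hsub : Icc a b ⊆ Icc c d ∪ (Icc (min a c) (max a c) ∪ Icc (min b d) (max b d)) := by
    intro x hx
    rcases hx with ⟨hax, hxb⟩
    by_cases h : c ≤ x ∧ x ≤ d
    · exact Or.inl h
    · right
      rcases not_and_or.mp h with h | h
      · exact Or.inl ⟨le_trans (min_le_left _ _) hax, le_trans (le_of_not_ge h) (le_max_right _ _)⟩
      · exact Or.inr ⟨le_trans (min_le_right _ _) (le_of_not_ge h), le_trans hxb (le_max_left _ _)⟩
  calc gaussianReal ψ 1 (Icc a b)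
      ≤ gaussianReal ψ 1 (Icc c d) + gaussianReal ψ 1 (Icc (min a c) (max a c) ∪ Icc (min b d) (max b d)) :=
        le_trans (measure_mono hsub) (measure_union_le _ _)
    _ ≤ gaussianReal ψ 1 (Icc c d) + (gaussianReal ψ 1 (Icc (min a c) (max a c)) + gaussianReal ψ 1 (Icc (min b d) (max b d))) := by
        gcongr
        exact measure_union_le _ _
    _ ≤ gaussianReal ψ 1 (Icc c d) + (ENNReal.ofReal ((max a c - min a c)/2) + ENNReal.ofReal ((max b d - min b d)/2)) := by
        gcongr <;> exact s5_gauss_Icc_le _ _ _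
    _ = gaussianReal ψ 1 (Icc c d) + ENNReal.ofReal ((|a - c| + |b - d|)/2) := by
        rw [← ENNReal.ofReal_add (div_nonneg (sub_nonneg.2 (min_le_max)) (by norm_num))
          (div_nonneg (sub_nonneg.2 (min_le_max)) (by norm_num))]
        congr 1
        rw [max_sub_min_eq_abs, max_sub_min_eq_abs, abs_sub_comm c a, abs_sub_comm d b]
        ring


lemma s5_gamma_shift {a r : ℝ} (ha : 0 < a) (hr : 0 < r) (w : ℝ) :
    w * gammaPDFReal a r w = (a / r) * gammaPDFReal (a + 1) r w := by
  unfold gammaPDFReal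
  by_cases hw : 0 ≤ w
  · rw [if_pos hw, if_pos hw]
    have hG : Real.Gamma (a + 1) = a * Real.Gamma a := Real.Gamma_add_one ha.ne'
    have hrp : r ^ (a + 1) = r ^ a * r := Real.rpow_add_one hr.ne' a
    have hwp : w * w ^ (a - 1) = w ^ ((a + 1) - 1) := by
      rcases eq_or_lt_of_le hw with h | h
      · rw [← h]
        rw [Real.zero_rpow (by linarith : a + 1 - 1 ≠ 0), zero_mul]
      · have : ((a + 1) - 1) = (a - 1) + 1 := by ring
        rw [this, Real.rpow_add_one h.ne' (a - 1)]
        ring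
    have hGa : Real.Gamma a ≠ 0 := (Real.Gamma_pos_of_pos ha).ne'
    rw [hG, hrp, ← hwp]
    field_simp
  · rw [if_neg hw, if_neg hw, mul_zero, mul_zero]

lemma s5_var_identity {a r : ℝ} (ha : 0 < a) (hr : 0 < r) (w : ℝ) :
    (w - a/r)^2 * gammaPDFReal a r w + (2*(a/r)*(a/r)) * gammaPDFReal (a+1) r w
      = ((a/r)*((a+1)/r)) * gammaPDFReal (a+2) r w + (a/r)^2 * gammaPDFReal a r w := by
  have h1 := s5_gamma_shift ha hr w
  have h2 := s5_gamma_shift (by linarith : (0:ℝ) < a + 1) hr w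
  have e2 : a + 1 + 1 = a + 2 := by ring
  rw [e2] at h2
  linear_combination (w - 2*(a/r)) * h1 + (a/r) * h2

lemma s5_gamma_sq_lintegral {a r : ℝ} (ha : 0 < a) (hr : 0 < r) :
    ∫⁻ w, ENNReal.ofReal ((w - a/r)^2) ∂(gammaMeasure a r) = ENNReal.ofReal (a / r^2) := by
  have hm : Measurable fun w : ℝ => ENNReal.ofReal ((w - a/r)^2) := by
    measurability
  have m0 : Measurable (gammaPDF a r) := (measurable_gammaPDFReal _ _).ennreal_ofReal
  rw [gammaMeasure, lintegral_withDensity_eq_lintegral_mul _ m0 hm]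
  have key : ∀ w : ℝ, (gammaPDF a r * fun w => ENNReal.ofReal ((w - a/r)^2)) w
        + ENNReal.ofReal (2*(a/r)*(a/r)) * gammaPDF (a+1) r w
      = ENNReal.ofReal ((a/r)*((a+1)/r)) * gammaPDF (a+2) r w
        + ENNReal.ofReal ((a/r)^2) * gammaPDF a r w := by
    intro w
    have hnn := gammaPDFReal_nonneg ha hr w
    have hnn1 := gammaPDFReal_nonneg (by linarith : (0:ℝ) < a+1) hr w
    have hnn2 := gammaPDFReal_nonneg (by linarith : (0:ℝ) < a+2) hr w
    simp only [Pi.mul_apply, gammaPDF]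
    rw [← ENNReal.ofReal_mul hnn, ← ENNReal.ofReal_mul (by positivity),
      ← ENNReal.ofReal_mul (by positivity), ← ENNReal.ofReal_mul (by positivity),
      ← ENNReal.ofReal_add (by positivity) (by positivity),
      ← ENNReal.ofReal_add (by positivity) (by positivity)]
    congr 1
    have := s5_var_identity ha hr w
    linarith [this]
  have hint : ∫⁻ w, ((gammaPDF a r * fun w => ENNReal.ofReal ((w - a/r)^2)) w
        + ENNReal.ofReal (2*(a/r)*(a/r)) * gammaPDF (a+1) r w)
      = ∫⁻ w, (ENNReal.ofReal ((a/r)*((a+1)/r)) * gammaPDF (a+2) r w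
        + ENNReal.ofReal ((a/r)^2) * gammaPDF a r w) := lintegral_congr key
  have m1 : Measurable (gammaPDF (a+1) r) := (measurable_gammaPDFReal _ _).ennreal_ofReal
  have m2 : Measurable (gammaPDF (a+2) r) := (measurable_gammaPDFReal _ _).ennreal_ofReal
  rw [lintegral_add_right _ (m1.const_mul _), lintegral_add_left (m2.const_mul _),
    lintegral_const_mul _ m1, lintegral_const_mul _ m2, lintegral_const_mul _ m0,
    lintegral_gammaPDF_eq_one (by linarith) hr, lintegral_gammaPDF_eq_one (by linarith) hr,
    lintegral_gammaPDF_eq_one ha hr, mul_one, mul_one, mul_one] at hint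
  have := ENNReal.eq_sub_of_add_eq (ENNReal.ofReal_ne_top) hint
  rw [this, ← ENNReal.ofReal_add (by positivity) (by positivity),
    ← ENNReal.ofReal_sub _ (by positivity)]
  congr 1
  field_simp
  ring


lemma s5_chiSq_neg (k : ℕ) : chiSq k (Iio 0) = 0 := by
  rw [chiSq, gammaMeasure, withDensity_apply _ measurableSet_Iio]
  exact lintegral_gammaPDF_of_nonpos le_rfl

lemma s5_chiR_tail_bound (n : ℕ) (hn : 2 ≤ n) (δ : ℝ) (hδ : 0 < δ) (hδ2 : δ ≤ 1/2) :
    (chiR n {R | δ < |R - 1|}).toReal ≤ 2 / (δ^2 * ((n:ℝ) - 1)) := by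
  set m : ℝ := (n:ℝ) - 1 with hm_def
  have hm1 : (1:ℝ) ≤ m := by
    have : (2:ℝ) ≤ (n:ℝ) := by exact_mod_cast hn
    simp only [hm_def]; linarith
  have hm0 : (0:ℝ) < m := by linarith
  have hcast : ((n - 1 : ℕ) : ℝ) = m := by
    have h1 : (1:ℕ) ≤ n := by omega
    push_cast [h1]; ring
  have hf : Measurable fun w : ℝ => Real.sqrt (w / ((n:ℝ) - 1)) :=
    (measurable_id.div_const _).sqrt
  have hs : MeasurableSet {R : ℝ | δ < |R - 1|} := by
    have : Continuous fun R : ℝ => |R - 1| := by continuity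
    exact measurableSet_lt measurable_const this.measurable
  rw [chiR, Measure.map_apply hf hs]
  have hsub : (fun w : ℝ => Real.sqrt (w / ((n:ℝ) - 1))) ⁻¹' {R | δ < |R - 1|}
      ⊆ Iio 0 ∪ {w | ENNReal.ofReal ((δ*m)^2) ≤ ENNReal.ofReal ((w - m)^2)} := by
    intro w hw
    simp only [mem_preimage, mem_setOf_eq] at hw
    by_cases hw0 : w < 0
    · exact Or.inl hw0
    · right
      push_neg at hw0
      have hu : 0 ≤ w / m := div_nonneg hw0 hm0.le
      set s := Real.sqrt (w / m) with hs_def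
      have hs2 : s^2 = w / m := Real.sq_sqrt hu
      have hweq : w = s^2 * m := by
        rw [hs2]; field_simp
      have hs0 : 0 ≤ s := Real.sqrt_nonneg _
      have key : δ * m ≤ |w - m| := by
        rcases lt_abs.mp hw with h | h
        · -- δ < s - 1
          have h1 : 1 + δ ≤ s := by linarith
          have h2 : (1+δ)^2 ≤ s^2 := by nlinarith
          have h3 : δ ≤ s^2 - 1 := by nlinarith
          have h4 : δ * m ≤ w - m := by
            calc δ * m ≤ (s^2 - 1) * m := mul_le_mul_of_nonneg_right h3 hm0.le
              _ = w - m := by rw [hweq]; ring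
          exact le_trans h4 (le_abs_self _)
        · -- δ < 1 - s
          have h1 : s ≤ 1 - δ := by linarith
          have h2 : s^2 ≤ (1-δ)^2 := by nlinarith
          have h3 : δ ≤ 1 - s^2 := by nlinarith
          have h4 : δ * m ≤ m - w := by
            calc δ * m ≤ (1 - s^2) * m := mul_le_mul_of_nonneg_right h3 hm0.le
              _ = m - w := by rw [hweq]; ring
          calc δ * m ≤ m - w := h4
            _ ≤ |w - m| := by rw [abs_sub_comm]; exact le_abs_self _
      simp only [mem_setOf_eq]
      have hms : (δ*m) * (δ*m) ≤ |w - m| * |w - m| :=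
        mul_self_le_mul_self (by positivity) key
      have hsq : (δ*m)^2 ≤ (w - m)^2 := by nlinarith [sq_abs (w-m)]
      exact ENNReal.ofReal_le_ofReal hsq
  have markov : chiSq (n-1) {w | ENNReal.ofReal ((δ*m)^2) ≤ ENNReal.ofReal ((w - m)^2)}
      ≤ ENNReal.ofReal (2*m) / ENNReal.ofReal ((δ*m)^2) := by
    rw [ENNReal.le_div_iff_mul_le (Or.inl (by positivity)) (Or.inl ENNReal.ofReal_ne_top)]
    rw [mul_comm]
    have ha : (0:ℝ) < ((n-1:ℕ):ℝ)/2 := by rw [hcast]; linarith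
    have := mul_meas_ge_le_lintegral₀
      (f := fun w : ℝ => ENNReal.ofReal ((w - m)^2))
      (μ := chiSq (n-1)) (((measurable_id.sub_const m).pow_const 2).ennreal_ofReal.aemeasurable)
      (ENNReal.ofReal ((δ*m)^2))
    refine le_trans this ?_
    rw [chiSq]
    have heq : (((n-1:ℕ):ℝ)/2) / (1/2 : ℝ) = m := by rw [hcast]; ring
    have := s5_gamma_sq_lintegral (a := ((n-1:ℕ):ℝ)/2) (r := (1/2:ℝ)) ha (by norm_num)
    rw [heq] at this
    rw [this]
    apply ENNReal.ofReal_le_ofReal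
    rw [hcast]
    have hr2 : m / 2 / ((1:ℝ)/2)^2 = 2*m := by ring
    linarith
  have total : chiSq (n-1) ((fun w : ℝ => Real.sqrt (w / ((n:ℝ) - 1))) ⁻¹' {R | δ < |R - 1|})
      ≤ ENNReal.ofReal (2*m) / ENNReal.ofReal ((δ*m)^2) := by
    calc chiSq (n-1) _ ≤ chiSq (n-1) (Iio 0 ∪ {w | ENNReal.ofReal ((δ*m)^2) ≤ ENNReal.ofReal ((w - m)^2)}) :=
          measure_mono hsub
      _ ≤ chiSq (n-1) (Iio 0) + chiSq (n-1) {w | ENNReal.ofReal ((δ*m)^2) ≤ ENNReal.ofReal ((w - m)^2)} :=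
          measure_union_le _ _
      _ = chiSq (n-1) {w | ENNReal.ofReal ((δ*m)^2) ≤ ENNReal.ofReal ((w - m)^2)} := by
          rw [s5_chiSq_neg, zero_add]
      _ ≤ _ := markov
  have hfin : ENNReal.ofReal (2*m) / ENNReal.ofReal ((δ*m)^2) ≠ ⊤ := by
    refine (ENNReal.div_lt_top ENNReal.ofReal_ne_top ?_).ne
    simp only [ne_eq, ENNReal.ofReal_eq_zero, not_le]
    positivity
  calc (chiSq (n-1) _).toReal ≤ (ENNReal.ofReal (2*m) / ENNReal.ofReal ((δ*m)^2)).toReal :=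
        ENNReal.toReal_mono hfin total
    _ = (2*m) / (δ*m)^2 := by
        rw [ENNReal.toReal_div, ENNReal.toReal_ofReal (by positivity), ENNReal.toReal_ofReal (by positivity)]
    _ = 2 / (δ^2 * m) := by field_simp


lemma s5_tendsto_bound (δ : ℝ) (hδ : 0 < δ) :
    Tendsto (fun n : ℕ => 2/(δ^2*((n:ℝ)-1))) atTop (nhds 0) := by
  have h1 : Tendsto (fun n : ℕ => ((n:ℝ) - 1)) atTop atTop :=
    tendsto_atTop_add_const_right atTop (-1) tendsto_natCast_atTop_atTop
  have h2 : Tendsto (fun n : ℕ => ((n:ℝ) - 1)⁻¹) atTop (nhds 0) := h1.inv_tendsto_atTop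
  have h3 := h2.const_mul (2/δ^2)
  rw [mul_zero] at h3
  refine h3.congr fun n => ?_
  rw [div_eq_mul_inv, div_eq_mul_inv, mul_inv]
  ring

lemma s5_analytic (z q L : ℝ) (hq : 0 < q) (hL : 0 < L) (b binv : ℝ → ℝ)
    (hb_mono : StrictMono b)
    (hbinv_right : Function.RightInverse binv b)
    (hbinv_uc : UniformContinuous binv)
    (he_zero : ∀ x : ℝ, q ≤ |x| → b x - x - z = 0)
    (he_lip : ∀ x y : ℝ, |(b x - x - z) - (b y - y - z)| ≤ L * |x - y|)
    (ε : ℝ) (hε : 0 < ε) :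
    ∃ δ : ℝ, 0 < δ ∧ δ ≤ 1/2 ∧
      ∀ ψ R : ℝ, |R - 1| ≤ δ → |R * binv (ψ / R) - binv ψ| ≤ ε := by
  have hEe : ∀ u : ℝ, u - binv u - z = b (binv u) - binv u - z := by
    intro u; rw [hbinv_right u]
  set B := 2*L*q with hB_def
  have hB0 : 0 ≤ B := by positivity
  have hEbound : ∀ u : ℝ, |u - binv u - z| ≤ B := by
    intro u; rw [hEe]
    set x := binv u
    by_cases hx : q ≤ |x|
    · rw [he_zero x hx, abs_zero]; exact hB0
    · push_neg at hx
      have h0 : b q - q - z = 0 := he_zero q (by rw [abs_of_pos hq])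
      have hlip := he_lip x q
      rw [h0, sub_zero] at hlip
      have hxq : |x - q| ≤ 2*q := by
        rcases abs_lt.mp hx with ⟨h1, h2⟩
        rw [abs_le]; constructor <;> linarith
      calc |b x - x - z| ≤ L * |x - q| := hlip
        _ ≤ L * (2*q) := by nlinarith
        _ = B := by rw [hB_def]; ring
  clear_value B
  set M := q + |z| + 1 with hM_def
  have hM1 : 1 ≤ M := by have := abs_nonneg z; simp only [hM_def]; linarith
  have hM0 : 0 < M := by linarith
  have hbq : b q = q + z := by have := he_zero q (by rw [abs_of_pos hq]); linarith
  have hbnq : b (-q) = -q + z := by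
    have := he_zero (-q) (by rw [abs_neg, abs_of_pos hq]); linarith
  have hEzero : ∀ u : ℝ, M ≤ |u| → u - binv u - z = 0 := by
    intro u hu
    rw [hEe]
    apply he_zero
    rcases le_abs'.mp hu with h | h
    · -- u ≤ -M
      have h1 : b (binv u) ≤ b (-q) := by
        rw [hbinv_right u, hbnq]
        have h2 := neg_abs_le z
        simp only [hM_def] at h; linarith
      have h2 : binv u ≤ -q := (hb_mono.le_iff_le).mp h1
      exact le_trans (by linarith : q ≤ -(binv u)) (neg_le_abs _)
    · -- M ≤ u
      have h1 : b q ≤ b (binv u) := by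
        rw [hbinv_right u, hbq]
        have h2 := le_abs_self z
        simp only [hM_def] at h; linarith
      have h2 : q ≤ binv u := (hb_mono.le_iff_le).mp h1
      exact le_trans h2 (le_abs_self _)
  clear_value M
  -- modulus of continuity for E
  obtain ⟨δ₁, hδ₁, hδ₁'⟩ := Metric.uniformContinuous_iff.mp hbinv_uc (ε/(2*L)) (by positivity)
  set δ₀ := δ₁/2 with hδ₀_def
  have hδ₀ : 0 < δ₀ := by positivity
  have hmod : ∀ u v : ℝ, |u - v| ≤ δ₀ → |(u - binv u - z) - (v - binv v - z)| ≤ ε/2 := by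
    intro u v huv
    have hd : dist u v < δ₁ := by rw [Real.dist_eq]; simp only [hδ₀_def] at huv; linarith
    have hd2 := hδ₁' hd
    rw [Real.dist_eq] at hd2
    calc |(u - binv u - z) - (v - binv v - z)|
        = |(b (binv u) - binv u - z) - (b (binv v) - binv v - z)| := by rw [hEe u, hEe v]
      _ ≤ L * |binv u - binv v| := he_lip _ _
      _ ≤ ε/2 := by
          have : L * |binv u - binv v| ≤ L * (ε/(2*L)) := by nlinarith
          have hL' : L * (ε/(2*L)) = ε/2 := by field_simp
          linarith
  clear_value δ₀
  refine ⟨min (1/2) (min (δ₀/(4*M)) (ε/(2*(|z|+B+1)))), by positivity, min_le_left _ _, ?_⟩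
  intro ψ R hR
  have habs := abs_nonneg z
  have hR1 : |R - 1| ≤ 1/2 := le_trans hR (min_le_left _ _)
  have hδa : |R-1| ≤ δ₀/(4*M) := le_trans hR (le_trans (min_le_right _ _) (min_le_left _ _))
  have hδb : |R-1| ≤ ε/(2*(|z|+B+1)) := le_trans hR (le_trans (min_le_right _ _) (min_le_right _ _))
  obtain ⟨hRl, hRr⟩ := abs_le.mp hR1
  have hRlo : (1:ℝ)/2 ≤ R := by linarith
  have hRhi : R ≤ 3/2 := by linarith
  have hR0 : 0 < R := by linarith
  have key : R * binv (ψ/R) - binv ψ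
      = (1-R)*z + ((ψ - binv ψ - z) - (ψ/R - binv (ψ/R) - z)) + (1-R)*(ψ/R - binv (ψ/R) - z) := by
    field_simp
    ring
  have p1 : |(1-R)*z| ≤ |R-1| * |z| := by
    rw [abs_mul, abs_sub_comm 1 R]
  have p3 : |(1-R)*(ψ/R - binv (ψ/R) - z)| ≤ |R-1| * B := by
    rw [abs_mul, abs_sub_comm 1 R]
    exact mul_le_mul_of_nonneg_left (hEbound _) (abs_nonneg _)
  have p2 : |(ψ - binv ψ - z) - (ψ/R - binv (ψ/R) - z)| ≤ ε/2 := by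
    by_cases hψ : 2*M ≤ |ψ|
    · have h1 : M ≤ |ψ| := by linarith
      have h2 : M ≤ |ψ/R| := by
        rw [abs_div, abs_of_pos hR0, le_div_iff₀ hR0]
        nlinarith
      rw [hEzero ψ h1, hEzero _ h2, sub_zero, abs_zero]
      positivity
    · push_neg at hψ
      apply hmod
      have heq : ψ - ψ/R = ψ * (R - 1) / R := by field_simp
      rw [heq, abs_div, abs_mul, abs_of_pos hR0]
      rw [div_le_iff₀ hR0]
      have hMd : 0 < δ₀/(4*M) := by positivity
      calc |ψ| * |R - 1| ≤ (2*M) * (δ₀/(4*M)) := by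
            apply mul_le_mul hψ.le hδa (abs_nonneg _) (by linarith)
        _ = δ₀/2 := by field_simp; ring
        _ ≤ δ₀ * R := by nlinarith
  have hzB : |R-1| * (|z| + B) ≤ ε/2 := by
    have h1 : |R-1| * (|z|+B) ≤ (ε/(2*(|z|+B+1)))*(|z|+B) := by
      apply mul_le_mul_of_nonneg_right hδb (by positivity)
    have h2 : (ε/(2*(|z|+B+1)))*(|z|+B) ≤ ε/2 := by
      rw [div_mul_eq_mul_div, div_le_div_iff₀ (by positivity) (by norm_num)]
      nlinarith
    linarith
  calc |R * binv (ψ/R) - binv ψ|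
      ≤ |(1-R)*z| + |(ψ - binv ψ - z) - (ψ/R - binv (ψ/R) - z)| + |(1-R)*(ψ/R - binv (ψ/R) - z)| := by
        rw [key]; exact le_trans (abs_add_le _ _) (by linarith [abs_add_le ((1-R)*z) ((ψ - binv ψ - z) - (ψ/R - binv (ψ/R) - z))])
    _ ≤ |R-1| * |z| + ε/2 + |R-1| * B := by linarith
    _ ≤ ε := by nlinarith [abs_nonneg (R-1)]


section SetEq
variable {b binv : ℝ → ℝ}

lemma s5_binv_le_iff (hb_mono : StrictMono b) (hbinv_right : Function.RightInverse binv b)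
    (u t : ℝ) : binv u ≤ t ↔ u ≤ b t := by
  rw [← hb_mono.le_iff_le, hbinv_right u]

lemma s5_hset1 (hb_mono : StrictMono b) (hbinv_right : Function.RightInverse binv b) (ψ : ℝ) :
    {x : ℝ | -b (-x) ≤ ψ ∧ ψ ≤ b x} = Icc (binv ψ) (-(binv (-ψ))) := by
  ext x
  simp only [mem_setOf_eq, mem_Icc]
  have e2 : (ψ ≤ b x) ↔ (binv ψ ≤ x) := (s5_binv_le_iff hb_mono hbinv_right ψ x).symm
  have e1 : (-b (-x) ≤ ψ) ↔ (x ≤ -(binv (-ψ))) := by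
    rw [neg_le, ← s5_binv_le_iff hb_mono hbinv_right, le_neg]
  rw [e1, e2, and_comm]

lemma s5_hsect (hb_mono : StrictMono b) (hbinv_right : Function.RightInverse binv b)
    (ψ R : ℝ) (hR : 0 < R) :
    {x : ℝ | -(R * b (-(x / R))) ≤ ψ ∧ ψ ≤ R * b (x / R)}
      = Icc (R * binv (ψ/R)) (-(R * binv ((-ψ)/R))) := by
  ext x
  simp only [mem_setOf_eq, mem_Icc]
  have e2 : (ψ ≤ R * b (x/R)) ↔ (R * binv (ψ/R) ≤ x) := by
    rw [mul_comm R (b (x/R)), ← div_le_iff₀ hR, ← s5_binv_le_iff hb_mono hbinv_right,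
      le_div_iff₀ hR, mul_comm (binv (ψ/R)) R]
  have e1 : (-(R * b (-(x/R))) ≤ ψ) ↔ (x ≤ -(R * binv ((-ψ)/R))) := by
    rw [neg_le, mul_comm R (b (-(x/R))), ← div_le_iff₀ hR,
      ← s5_binv_le_iff hb_mono hbinv_right, le_neg, div_le_iff₀ hR,
      show -binv ((-ψ)/R) * R = -(R * binv ((-ψ)/R)) by ring]
  rw [e1, e2, and_comm]
end SetEq


lemma s5_abs_toReal_le {A B c : ENNReal} (hA : A ≠ ⊤) (hB : B ≠ ⊤) (hc : c ≠ ⊤)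
    (h1 : A ≤ B + c) (h2 : B ≤ A + c) : |A.toReal - B.toReal| ≤ c.toReal := by
  rw [abs_sub_le_iff]
  constructor
  · have := ENNReal.toReal_mono (by finiteness) h1
    rw [ENNReal.toReal_add hB hc] at this
    linarith
  · have := ENNReal.toReal_mono (by finiteness) h2
    rw [ENNReal.toReal_add hA hc] at this
    linarith

lemma s5_chiR_pos_ae (n : ℕ) (hn : 2 ≤ n) : ∀ᵐ R ∂(chiR n), 0 < R := by
  have hf : Measurable fun w : ℝ => Real.sqrt (w / ((n:ℝ) - 1)) :=
    (measurable_id.div_const _).sqrt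
  rw [ae_iff]
  have hset : {R : ℝ | ¬ 0 < R} = Iic 0 := by ext R; simp [not_lt]
  rw [hset, chiR, Measure.map_apply hf measurableSet_Iic]
  have hm : (0:ℝ) < (n:ℝ) - 1 := by
    have : (2:ℝ) ≤ (n:ℝ) := by exact_mod_cast hn
    linarith
  have hpre : (fun w : ℝ => Real.sqrt (w / ((n:ℝ) - 1))) ⁻¹' (Iic 0) = Iic 0 := by
    ext w
    simp only [mem_preimage, mem_Iic]
    constructor
    · intro h
      have h0 : Real.sqrt (w / ((n:ℝ)-1)) = 0 := le_antisymm h (Real.sqrt_nonneg _)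
      have := Real.sqrt_eq_zero'.mp h0
      rcases div_nonpos_iff.mp this with ⟨h1, h2⟩ | ⟨h1, h2⟩
      · linarith
      · exact h1
    · intro h
      rw [Real.sqrt_eq_zero'.mpr (div_nonpos_of_nonpos_of_nonneg h hm.le)]
  rw [hpre]
  have : Iic (0:ℝ) ⊆ Iio 0 ∪ {0} := by
    intro w hw
    rcases lt_or_eq_of_le (mem_Iic.mp hw) with h | h
    · exact Or.inl h
    · exact Or.inr (by simp [h])
  refine le_antisymm (le_trans (measure_mono this) ?_) (zero_le)
  refine le_trans (measure_union_le _ _) ?_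
  rw [s5_chiSq_neg]
  have h0 : chiSq (n-1) {(0:ℝ)} = 0 := by
    rw [chiSq, gammaMeasure, withDensity_apply _ (measurableSet_singleton 0)]
    exact setLIntegral_measure_zero _ _ (measure_singleton 0)
  simp [h0]

lemma s5_per_psi (b binv : ℝ → ℝ) (hb_cont : Continuous b) (hb_mono : StrictMono b)
    (hbinv_right : Function.RightInverse binv b)
    (n : ℕ) (hn : 2 ≤ n) (ψ : ℝ) (δ ε' : ℝ) (hδ0 : 0 < δ) (hε' : 0 ≤ ε')
    (hδ : ∀ φ R : ℝ, |R - 1| ≤ δ → |R * binv (φ / R) - binv φ| ≤ ε') :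
    |(gaussianReal ψ 1 {x : ℝ | -b (-x) ≤ ψ ∧ ψ ≤ b x}).toReal -
        (((gaussianReal ψ 1).prod (chiR n))
          {p : ℝ × ℝ | -(p.2 * b (-(p.1 / p.2))) ≤ ψ ∧ ψ ≤ p.2 * b (p.1 / p.2)}).toReal|
      ≤ ε' + (chiR n {R | δ < |R - 1|}).toReal := by
  have hm : (0:ℝ) < (n:ℝ) - 1 := by
    have : (2:ℝ) ≤ (n:ℝ) := by exact_mod_cast hn
    linarith
  have hf : Measurable fun w : ℝ => Real.sqrt (w / ((n:ℝ) - 1)) :=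
    (measurable_id.div_const _).sqrt
  haveI hP1 : IsProbabilityMeasure (chiSq (n-1)) := by
    refine isProbabilityMeasure_gammaMeasure ?_ (by norm_num)
    have : ((n-1:ℕ):ℝ) = (n:ℝ) - 1 := by
      have h1 : (1:ℕ) ≤ n := by omega
      push_cast [h1]; ring
    rw [this]; linarith
  haveI hP2 : IsProbabilityMeasure (chiR n) := by
    rw [chiR]; exact Measure.isProbabilityMeasure_map hf.aemeasurable
  set S := {p : ℝ × ℝ | -(p.2 * b (-(p.1 / p.2))) ≤ ψ ∧ ψ ≤ p.2 * b (p.1 / p.2)} with hS_def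
  have hg : Measurable fun p : ℝ × ℝ => p.2 * b (p.1/p.2) :=
    measurable_snd.mul (hb_cont.measurable.comp (measurable_fst.div measurable_snd))
  have hf2 : Measurable fun p : ℝ × ℝ => -(p.2 * b (-(p.1/p.2))) :=
    (measurable_snd.mul (hb_cont.measurable.comp (measurable_fst.div measurable_snd).neg)).neg
  have hSm : MeasurableSet S :=
    (measurableSet_le hf2 measurable_const).inter (measurableSet_le measurable_const hg)
  have hprod : ((gaussianReal ψ 1).prod (chiR n)) S
      = ∫⁻ R, gaussianReal ψ 1 ((fun x => (x, R)) ⁻¹' S) ∂(chiR n) :=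
    Measure.prod_apply_symm hSm
  set bad := {R : ℝ | δ < |R - 1|} with hbad_def
  have hbadm : MeasurableSet bad :=
    measurableSet_lt measurable_const ((measurable_id.sub_const 1).abs)
  set g := gaussianReal ψ 1 (Icc (binv ψ) (-(binv (-ψ)))) with hg_def
  have hpre : ∀ R : ℝ, 0 < R →
      (fun x => (x, R)) ⁻¹' S = Icc (R * binv (ψ/R)) (-(R * binv ((-ψ)/R))) := by
    intro R hR
    have h : (fun x => (x, R)) ⁻¹' S = {x : ℝ | -(R * b (-(x / R))) ≤ ψ ∧ ψ ≤ R * b (x / R)} := rfl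
    rw [h, s5_hsect hb_mono hbinv_right ψ R hR]
  have hend : ∀ R : ℝ, |R - 1| ≤ δ →
      (|R * binv (ψ/R) - binv ψ| + |(-(R * binv ((-ψ)/R))) - (-(binv (-ψ)))|)/2 ≤ ε' := by
    intro R hRg
    have h1 := hδ ψ R hRg
    have h2 := hδ (-ψ) R hRg
    have h3 : (-(R * binv ((-ψ)/R))) - (-(binv (-ψ))) = -(R * binv ((-ψ)/R) - binv (-ψ)) := by ring
    rw [h3, abs_neg]
    linarith
  have claimA : ∀ᵐ R ∂(chiR n), gaussianReal ψ 1 ((fun x => (x, R)) ⁻¹' S)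
      ≤ g + ENNReal.ofReal ε' + bad.indicator (fun _ => 1) R := by
    filter_upwards [s5_chiR_pos_ae n hn] with R hR0
    by_cases hRg : |R - 1| ≤ δ
    · have hnm : R ∉ bad := by simp only [hbad_def, mem_setOf_eq, not_lt]; exact hRg
      rw [hpre R hR0, indicator_of_notMem hnm, add_zero, hg_def]
      refine le_trans (s5_gauss_Icc_le_add ψ _ _ (binv ψ) (-(binv (-ψ)))) ?_
      exact add_le_add_right (ENNReal.ofReal_le_ofReal (hend R hRg)) _
    · push_neg at hRg
      have hmem : R ∈ bad := hRg
      rw [indicator_of_mem hmem]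
      calc gaussianReal ψ 1 _ ≤ 1 := prob_le_one
        _ ≤ g + ENNReal.ofReal ε' + 1 := le_add_self
  have claimB : ∀ᵐ R ∂(chiR n), g ≤ gaussianReal ψ 1 ((fun x => (x, R)) ⁻¹' S)
      + (ENNReal.ofReal ε' + bad.indicator (fun _ => 1) R) := by
    filter_upwards [s5_chiR_pos_ae n hn] with R hR0
    by_cases hRg : |R - 1| ≤ δ
    · have hnm : R ∉ bad := by simp only [hbad_def, mem_setOf_eq, not_lt]; exact hRg
      rw [hpre R hR0, indicator_of_notMem hnm, add_zero, hg_def]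
      refine le_trans (s5_gauss_Icc_le_add ψ (binv ψ) (-(binv (-ψ))) (R * binv (ψ/R)) (-(R * binv ((-ψ)/R)))) ?_
      apply add_le_add_right
      apply ENNReal.ofReal_le_ofReal
      have := hend R hRg
      rw [abs_sub_comm (R * binv (ψ/R)), abs_sub_comm (-(R * binv ((-ψ)/R)))] at this
      linarith
    · have hmem : R ∈ bad := not_le.mp hRg
      rw [indicator_of_mem hmem]
      calc g ≤ 1 := prob_le_one
        _ ≤ gaussianReal ψ 1 ((fun x => (x, R)) ⁻¹' S) + (ENNReal.ofReal ε' + 1) := by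
          rw [← add_assoc]; exact le_add_self
  have hindm : Measurable (bad.indicator (fun _ : ℝ => (1:ENNReal))) :=
    measurable_const.indicator hbadm
  have hindint : ∫⁻ R, bad.indicator (fun _ => (1:ENNReal)) R ∂(chiR n) = chiR n bad := by
    rw [lintegral_indicator hbadm, setLIntegral_const, one_mul]
  have intA : ((gaussianReal ψ 1).prod (chiR n)) S ≤ g + (ENNReal.ofReal ε' + chiR n bad) := by
    rw [hprod]
    refine le_trans (lintegral_mono_ae claimA) (le_of_eq ?_)
    rw [lintegral_add_right _ hindm, lintegral_const, measure_univ, mul_one, hindint, add_assoc]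
  have intB : g ≤ ((gaussianReal ψ 1).prod (chiR n)) S + (ENNReal.ofReal ε' + chiR n bad) := by
    have hgint : ∫⁻ _ : ℝ, g ∂(chiR n) = g := by rw [lintegral_const, measure_univ, mul_one]
    rw [← hgint, hprod]
    refine le_trans (lintegral_mono_ae claimB) (le_of_eq ?_)
    rw [lintegral_add_right (g := fun R => ENNReal.ofReal ε' + bad.indicator (fun _ => (1:ENNReal)) R) _ (measurable_const.add hindm),
      lintegral_add_left measurable_const, lintegral_const, measure_univ, mul_one, hindint]
  have hcfin : (ENNReal.ofReal ε' + chiR n bad) ≠ ⊤ :=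
    ENNReal.add_ne_top.mpr ⟨ENNReal.ofReal_ne_top, measure_ne_top _ _⟩
  have hfinal := s5_abs_toReal_le (measure_ne_top _ _) (measure_ne_top _ _) hcfin intB intA
  rw [ENNReal.toReal_add ENNReal.ofReal_ne_top (measure_ne_top _ _),
    ENNReal.toReal_ofReal hε'] at hfinal
  rw [s5_hset1 hb_mono hbinv_right ψ]
  exact hfinal


end Stmt5Aux

/-- Theorem 2, result R1.  Under assumptions (A1)–(A2) on the endpoint
function `b`, the coverage probabilities of `C* = [-b(-X), b(X)]` (with `X ~ N(ψ,1)`) and of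
`D*_n = [-R_n b(-X/R_n), R_n b(X/R_n)]` (with `R_n` independent of `X` and `(n-1)R_n² ~ χ²_{n-1}`)
differ by an amount tending to `0` uniformly in `ψ` as `n → ∞`. -/
theorem statement5
    (α : ℝ) (hα : α ∈ Set.Ioo (0 : ℝ) 1)
    (z : ℝ) (hz : gaussianReal 0 1 (Set.Icc (-z) z) = ENNReal.ofReal (1 - α))
    (q : ℝ) (hq : 0 < q) (L : ℝ) (hL : 0 < L)
    (b binv : ℝ → ℝ)
    -- (A1): `b` is continuous and strictly increasing, with uniformly continuous inverse
    (hb_cont : Continuous b) (hb_mono : StrictMono b)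
    (hbinv_left : Function.LeftInverse binv b)
    (hbinv_right : Function.RightInverse binv b)
    (hbinv_uc : UniformContinuous binv)
    -- (A2): `e(x) = b(x) - x - z` vanishes for `|x| ≥ q` and is `L`-Lipschitz
    (he_zero : ∀ x : ℝ, q ≤ |x| → b x - x - z = 0)
    (he_lip : ∀ x y : ℝ, |(b x - x - z) - (b y - y - z)| ≤ L * |x - y|) :
    Tendsto
      (fun n : ℕ =>
        ⨆ ψ : ℝ,
          |(gaussianReal ψ 1 {x : ℝ | -b (-x) ≤ ψ ∧ ψ ≤ b x}).toReal -
            (((gaussianReal ψ 1).prod (chiR n))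
              {p : ℝ × ℝ | -(p.2 * b (-(p.1 / p.2))) ≤ ψ ∧ ψ ≤ p.2 * b (p.1 / p.2)}).toReal|)
      atTop (nhds 0) := by
  rw [Metric.tendsto_atTop]
  intro ε hε
  obtain ⟨δ, hδ0, hδh, hδ⟩ := s5_analytic z q L hq hL b binv hb_mono hbinv_right hbinv_uc
    he_zero he_lip (ε/4) (by positivity)
  have htail : Tendsto (fun n : ℕ => 2/(δ^2*((n:ℝ)-1))) atTop (nhds 0) := s5_tendsto_bound δ hδ0
  have hev : ∀ᶠ n : ℕ in atTop, 2/(δ^2*((n:ℝ)-1)) < ε/4 := htail.eventually_lt_const (by positivity)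
  obtain ⟨N, hN⟩ := Filter.eventually_atTop.mp (hev.and (Filter.eventually_ge_atTop 2))
  refine ⟨N, fun n hn => ?_⟩
  obtain ⟨hNtail, hn2⟩ := hN n hn
  have htailb : (chiR n {R | δ < |R - 1|}).toReal ≤ 2/(δ^2*((n:ℝ)-1)) :=
    s5_chiR_tail_bound n hn2 δ hδ0 hδh
  have hbound : ∀ ψ : ℝ,
      |(gaussianReal ψ 1 {x : ℝ | -b (-x) ≤ ψ ∧ ψ ≤ b x}).toReal -
        (((gaussianReal ψ 1).prod (chiR n))
          {p : ℝ × ℝ | -(p.2 * b (-(p.1 / p.2))) ≤ ψ ∧ ψ ≤ p.2 * b (p.1 / p.2)}).toReal|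
      ≤ ε/4 + (chiR n {R | δ < |R - 1|}).toReal := fun ψ =>
    s5_per_psi b binv hb_cont hb_mono hbinv_right n hn2 ψ δ (ε/4) hδ0 (by positivity) hδ
  have htR : (0:ℝ) ≤ (chiR n {R | δ < |R - 1|}).toReal := ENNReal.toReal_nonneg
  have hsup := Real.iSup_le hbound (by positivity)
  rw [Real.dist_eq, sub_zero, abs_of_nonneg (Real.iSup_nonneg (fun ψ => abs_nonneg _))]
  calc (⨆ ψ : ℝ, |(gaussianReal ψ 1 {x : ℝ | -b (-x) ≤ ψ ∧ ψ ≤ b x}).toReal -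
        (((gaussianReal ψ 1).prod (chiR n))
          {p : ℝ × ℝ | -(p.2 * b (-(p.1 / p.2))) ≤ ψ ∧ ψ ≤ p.2 * b (p.1 / p.2)}).toReal|)
      ≤ ε/4 + (chiR n {R | δ < |R - 1|}).toReal := hsup
    _ < ε := by linarith
end

section
/- Let z ∈ ℝ, q > 0, 0 < L < ∞, and let e : ℝ → ℝ satisfy e(x) = 0 for all |x| ≥ q and |e(x) − e(y)| ≤ L|x − y| for all x, y; set b(x) = x + z + e(x). Let M be a finite constant such that |(r − 1)(z + e(x/r)) + (e(x/r) − e(x))| ≤ M δ whenever δ ∈ (0, 1/2], |r − 1| ≤ δ, r > 0 and x ∈ ℝ. Let ψ ∈ ℝ, let X ~ N(ψ,1), let R be a positive random variable independent of X, and let δ ∈ (0, 1/2]. Then P(ψ > b(X) + Mδ) − P(|R − 1| > δ) ≤ P({ψ > R·b(X/R)} ∩ {|R − 1| ≤ δ}) ≤ P(ψ > b(X) − Mδ). -/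
open MeasureTheory ProbabilityTheory

/-- Sandwich inequality: if `b(x) = x + z + e(x)` with `e` L-Lipschitz and
vanishing outside `[-q, q]`, `M` satisfies the perturbation bound, `X ~ N(ψ,1)` and `R > 0`
is independent of `X`, then for `δ ∈ (0, 1/2]`,
`P(ψ > b(X) + Mδ) − P(|R − 1| > δ) ≤ P({ψ > R b(X/R)} ∩ {|R − 1| ≤ δ}) ≤ P(ψ > b(X) − Mδ)`. -/
theorem statement9
    (z : ℝ) (q : ℝ) (hq : 0 < q) (L : ℝ) (hL : 0 < L)
    (e : ℝ → ℝ)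
    (he_zero : ∀ x : ℝ, q ≤ |x| → e x = 0)
    (he_lip : ∀ x y : ℝ, |e x - e y| ≤ L * |x - y|)
    (b : ℝ → ℝ) (hb : ∀ x, b x = x + z + e x)
    (M : ℝ)
    (hM : ∀ δ : ℝ, δ ∈ Set.Ioc (0 : ℝ) (1 / 2) → ∀ x r : ℝ, 0 < r → |r - 1| ≤ δ →
      |(r - 1) * (z + e (x / r)) + (e (x / r) - e x)| ≤ M * δ)
    (Ω : Type*) [MeasurableSpace Ω] (μ : Measure Ω) [IsProbabilityMeasure μ]
    (X R : Ω → ℝ) (hX_meas : Measurable X) (hR_meas : Measurable R)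
    (ψ : ℝ) (hX_law : μ.map X = gaussianReal ψ 1)
    (hR_pos : ∀ ω, 0 < R ω)
    (h_indep : IndepFun X R μ)
    (δ : ℝ) (hδ : δ ∈ Set.Ioc (0 : ℝ) (1 / 2)) :
    (μ {ω | b (X ω) + M * δ < ψ}).toReal - (μ {ω | δ < |R ω - 1|}).toReal ≤
      (μ ({ω | R ω * b (X ω / R ω) < ψ} ∩ {ω | |R ω - 1| ≤ δ})).toReal ∧
    (μ ({ω | R ω * b (X ω / R ω) < ψ} ∩ {ω | |R ω - 1| ≤ δ})).toReal ≤
      (μ {ω | b (X ω) - M * δ < ψ}).toReal := by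

  obtain ⟨hδ0, hδ2⟩ := hδ
  have key : ∀ ω : Ω, R ω * b (X ω / R ω) =
      b (X ω) + ((R ω - 1) * (z + e (X ω / R ω)) + (e (X ω / R ω) - e (X ω))) := by
    intro ω
    have hr : R ω ≠ 0 := (hR_pos ω).ne'
    rw [hb, hb]
    field_simp
    ring
  have hbound : ∀ ω : Ω, |R ω - 1| ≤ δ →
      |(R ω - 1) * (z + e (X ω / R ω)) + (e (X ω / R ω) - e (X ω))| ≤ M * δ :=
    fun ω h => hM δ ⟨hδ0, hδ2⟩ (X ω) (R ω) (hR_pos ω) h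
  set A := {ω | b (X ω) + M * δ < ψ} with hA
  set S := {ω | R ω * b (X ω / R ω) < ψ} ∩ {ω | |R ω - 1| ≤ δ} with hS
  set C := {ω | δ < |R ω - 1|} with hC
  have h1 : A ⊆ S ∪ C := by
    intro ω hω
    by_cases hle : |R ω - 1| ≤ δ
    · left
      refine ⟨?_, hle⟩
      have hb1 := hbound ω hle
      have : R ω * b (X ω / R ω) ≤ b (X ω) + M * δ := by
        rw [key ω]
        have := (abs_le.mp hb1).2
        linarith
      exact lt_of_le_of_lt this hω
    · right
      exact lt_of_not_ge hle
  have h2 : S ⊆ {ω | b (X ω) - M * δ < ψ} := by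
    intro ω ⟨h₁, h₂⟩
    have hb1 := hbound ω h₂
    have := (abs_le.mp hb1).1
    have hk := key ω
    simp only [Set.mem_setOf_eq] at h₁ ⊢
    linarith
  constructor
  · have hle : μ A ≤ μ S + μ C := (measure_mono h1).trans (measure_union_le S C)
    have h3 : (μ A).toReal ≤ (μ S).toReal + (μ C).toReal := by
      rw [← ENNReal.toReal_add (measure_ne_top μ _) (measure_ne_top μ _)]
      exact ENNReal.toReal_mono (by finiteness) hle
    linarith
  · exact ENNReal.toReal_mono (measure_ne_top μ _) (measure_mono h2)
end

section
/- Let z ∈ ℝ, q > 0, and let e : ℝ → ℝ be measurable and bounded with e(x) = 0 for all |x| ≥ q; set b(x) = x + z + e(x). For X ~ N(ψ,1), E_ψ[b(X) + b(−X)] → 2z as |ψ| → ∞. Consequently, the relative efficiency e(ψ) = (E_ψ(length of C*)/(2z))² of the interval C* = [−b(−X), b(X)] tends to 1 as |ψ| → ∞, where z > 0 is the quantile satisfying P(−z ≤ Z ≤ z) = 1 − α for Z ~ N(0,1). -/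
open MeasureTheory ProbabilityTheory Filter

/-- For `b(x) = x + z + e(x)` with `e` measurable, bounded and vanishing
outside `[-q, q]`, and `X ~ N(ψ,1)`, the expected length `E_ψ[b(X) + b(-X)]` of
`C* = [-b(-X), b(X)]` tends to `2z` as `|ψ| → ∞`; consequently the relative efficiency
`(E_ψ(length C*)/(2z))²` tends to `1` as `|ψ| → ∞`, where `z > 0` is the standard normal
quantile satisfying `P(-z ≤ Z ≤ z) = 1 - α`. -/
theorem statement17
    (α : ℝ) (hα : α ∈ Set.Ioo (0 : ℝ) 1)
    (z : ℝ) (hz_pos : 0 < z)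
    (hz : gaussianReal 0 1 (Set.Icc (-z) z) = ENNReal.ofReal (1 - α))
    (q : ℝ) (hq : 0 < q)
    (e : ℝ → ℝ) (he_meas : Measurable e)
    (he_bdd : ∃ C : ℝ, ∀ x, |e x| ≤ C)
    (he_zero : ∀ x : ℝ, q ≤ |x| → e x = 0)
    (b : ℝ → ℝ) (hb : ∀ x, b x = x + z + e x) :
    Tendsto (fun ψ : ℝ => ∫ x, (b x + b (-x)) ∂gaussianReal ψ 1)
        (cocompact ℝ) (nhds (2 * z)) ∧
      Tendsto (fun ψ : ℝ => ((∫ x, (b x + b (-x)) ∂gaussianReal ψ 1) / (2 * z)) ^ 2)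
        (cocompact ℝ) (nhds 1) := by
  obtain ⟨C, hC⟩ := he_bdd
  set h : ℝ → ℝ := fun x => e x + e (-x) with hh
  have hhm : Measurable h := he_meas.add (he_meas.comp measurable_neg)
  have hhb : ∀ x, |h x| ≤ 2 * C := fun x =>
    (abs_add_le _ _).trans (by linarith [hC x, hC (-x)])
  have hhz : ∀ x : ℝ, q ≤ |x| → h x = 0 := fun x hx => by
    simp [hh, he_zero x hx, he_zero (-x) (by rwa [abs_neg])]
  have key : ∀ ψ : ℝ, ∫ x, (b x + b (-x)) ∂gaussianReal ψ 1
      = 2 * z + ∫ x, h x ∂gaussianReal ψ 1 := by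
    intro ψ
    have h1 : ∀ x : ℝ, b x + b (-x) = 2 * z + h x := fun x => by
      simp only [hb, hh]; ring
    have hint : Integrable h (gaussianReal ψ 1) :=
      (integrable_const (2 * C)).mono' hhm.aestronglyMeasurable
        (ae_of_all _ fun x => by simpa [Real.norm_eq_abs] using hhb x)
    simp only [h1]
    rw [integral_add (integrable_const _) hint, integral_const]
    simp
  have hrep : ∀ ψ : ℝ, ∫ x, h x ∂gaussianReal ψ 1
      = ∫ x, gaussianPDFReal ψ 1 x * h x := by
    intro ψ
    rw [gaussianReal_of_var_ne_zero _ one_ne_zero]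
    have hd : gaussianPDF ψ 1 = fun x => ((gaussianPDFReal ψ 1 x).toNNReal : ENNReal) := rfl
    rw [hd, integral_withDensity_eq_integral_smul
      ((measurable_gaussianPDFReal ψ 1).real_toNNReal) h]
    congr 1; ext x
    simp [NNReal.smul_def, Real.coe_toNNReal _ (gaussianPDFReal_nonneg ψ 1 x)]
  have hpdf_nonneg := gaussianPDFReal_nonneg
  have hpdf_eq : ∀ ψ x : ℝ, gaussianPDFReal ψ 1 x
      = (Real.sqrt (2 * Real.pi))⁻¹ * Real.exp (-(x - ψ) ^ 2 / 2) := by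
    intro ψ x
    rw [gaussianPDFReal]
    norm_num
  have hpdf_bound : ∀ ψ x : ℝ, gaussianPDFReal ψ 1 x ≤ (Real.sqrt (2 * Real.pi))⁻¹ := by
    intro ψ x
    rw [hpdf_eq]
    have h1 : Real.exp (-(x - ψ) ^ 2 / 2) ≤ 1 := by
      rw [Real.exp_le_one_iff]
      nlinarith [sq_nonneg (x - ψ)]
    calc (Real.sqrt (2 * Real.pi))⁻¹ * Real.exp (-(x - ψ) ^ 2 / 2)
        ≤ (Real.sqrt (2 * Real.pi))⁻¹ * 1 := by
          apply mul_le_mul_of_nonneg_left h1; positivity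
      _ = (Real.sqrt (2 * Real.pi))⁻¹ := mul_one _
  -- pointwise limit of the pdf
  have hptw : ∀ x : ℝ, Tendsto (fun ψ : ℝ => gaussianPDFReal ψ 1 x) (cocompact ℝ) (nhds 0) := by
    intro x
    have h1 : Tendsto (fun ψ : ℝ => |ψ| + (-|x|)) (cocompact ℝ) atTop :=
      tendsto_atTop_add_const_right _ _
        ((tendsto_norm_cocompact_atTop (E := ℝ)).congr fun ψ => Real.norm_eq_abs ψ)
    have h2 : Tendsto (fun ψ : ℝ => |x - ψ|) (cocompact ℝ) atTop := by
      refine tendsto_atTop_mono (fun ψ => ?_) h1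
      have := abs_sub_abs_le_abs_sub ψ x
      rw [abs_sub_comm] at this
      linarith
    have h3 : Tendsto (fun ψ : ℝ => (x - ψ) ^ 2) (cocompact ℝ) atTop := by
      have := h2.atTop_mul_atTop₀ h2
      refine this.congr fun ψ => ?_
      rw [← abs_mul, ← sq, abs_sq]  -- or sq_abs
    have h4 : Tendsto (fun ψ : ℝ => -(x - ψ) ^ 2 / 2) (cocompact ℝ) atBot := by
      simp only [neg_div]
      exact tendsto_neg_atTop_atBot.comp (h3.atTop_div_const two_pos)
    have h5 : Tendsto (fun ψ : ℝ => Real.exp (-(x - ψ) ^ 2 / 2))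
        (cocompact ℝ) (nhds 0) := Real.tendsto_exp_atBot.comp h4
    have h6 := h5.const_mul (Real.sqrt (2 * Real.pi))⁻¹
    simp only [mul_zero] at h6
    exact (h6.congr fun ψ => (hpdf_eq ψ x).symm)
  -- dominated convergence
  set bound : ℝ → ℝ :=
    Set.indicator (Set.Icc (-q) q) (fun _ => (Real.sqrt (2 * Real.pi))⁻¹ * (2 * C)) with hbound
  haveI : (cocompact ℝ).IsCountablyGenerated := by
    rw [cocompact_eq_atBot_atTop]; infer_instance
  have hF : Tendsto (fun ψ : ℝ => ∫ x, gaussianPDFReal ψ 1 x * h x) (cocompact ℝ)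
      (nhds 0) := by
    have h0 : (0:ℝ) = ∫ x : ℝ, (0:ℝ) := by simp
    rw [h0]
    refine tendsto_integral_filter_of_dominated_convergence bound
      (Eventually.of_forall fun ψ => ((measurable_gaussianPDFReal ψ 1).mul hhm).aestronglyMeasurable)
      (Eventually.of_forall fun ψ => ae_of_all _ fun x => ?_)
      ?_ (ae_of_all _ fun x => by simpa using (hptw x).mul_const (h x))
    · by_cases hx : x ∈ Set.Icc (-q) q
      · rw [hbound, Set.indicator_of_mem hx]
        rw [Real.norm_eq_abs, abs_mul, abs_of_nonneg (hpdf_nonneg ψ 1 x)]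
        have hc0 : 0 ≤ C := (abs_nonneg _).trans (hC 0)
        exact mul_le_mul (hpdf_bound ψ x) (hhb x) (abs_nonneg _) (by positivity)
      · have hxq : q ≤ |x| := by
          simp only [Set.mem_Icc, not_and_or, not_le] at hx
          rcases hx with hx | hx
          · rw [abs_of_nonpos (by linarith)]; linarith
          · rw [abs_of_nonneg (by linarith)]; linarith
        rw [hbound, Set.indicator_of_notMem hx]
        simp [hhz x hxq]
    · rw [hbound, integrable_indicator_iff measurableSet_Icc]
      exact integrableOn_const measure_Icc_lt_top.ne
  have T1 : Tendsto (fun ψ : ℝ => ∫ x, (b x + b (-x)) ∂gaussianReal ψ 1)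
      (cocompact ℝ) (nhds (2 * z)) := by
    simp only [key, hrep]
    simpa using tendsto_const_nhds.add hF
  refine ⟨T1, ?_⟩
  have hne : (2 * z) ≠ 0 := by positivity
  have := (T1.div_const (2 * z)).pow 2
  simpa [div_self hne] using this
end
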